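/- For every integer k ≥ 1 and every positive integer n, S_k(n) = n^(k+1)/(k+1) + n^k/2 − (1/(k+1)) · Σ_{j=1}^{⌊k/2⌋} Σ_{m=1}^{j} (-1)^m · (m! · (m-1)! / (2m+1)!) · C(k+1, 2j) · R(j,m) · n^(k+1-2j), as an identity of rational numbers. -/

import Mathlib

/-- `S k n = 1^k + 2^k + ⋯ + n^k`, the sum of the `k`-th powers of the first `n`
positive integers. -/
def S (k n : ℕ) : ℕ := ∑ i ∈ Finset.Icc 1 n, i ^ k

/-- `R j m = ∑_{i=0}^m (-1)^i C(2m, i) (m-i)^{2j}`, the sequence A304330. -/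
def R (j m : ℕ) : ℤ :=
  ∑ i ∈ Finset.range (m + 1),
    (-1 : ℤ) ^ i * ((2 * m).choose i : ℤ) * (((m - i) ^ (2 * j) : ℕ) : ℤ)

open Finset

/-- Central factorial numbers of the second kind `U j m = T(2j, 2m)`. -/
def U : ℕ → ℕ → ℕ
  | 0, 0 => 1
  | 0, _ + 1 => 0
  | _ + 1, 0 => 0
  | j + 1, m + 1 => U j m + (m + 1) ^ 2 * U j (m + 1)

lemma U_zero_succ (m : ℕ) : U 0 (m + 1) = 0 := rfl
lemma U_succ_zero (j : ℕ) : U (j + 1) 0 = 0 := rfl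
lemma U_succ_succ (j m : ℕ) : U (j + 1) (m + 1) = U j m + (m + 1) ^ 2 * U j (m + 1) := rfl

lemma U_eq_zero : ∀ j m, j < m → U j m = 0
  | 0, m + 1, _ => rfl
  | j + 1, m + 1, h => by
      rw [U_succ_succ, U_eq_zero j m (by omega), U_eq_zero j (m + 1) (by omega)]; ring
  | 0, 0, h => absurd h (lt_irrefl 0)

/-- full alternating sum `A j m = ∑_{i=0}^{2m} (-1)^i C(2m,i) (m-i)^{2j}` in ℤ. -/
def A (j m : ℕ) : ℤ :=
  ∑ i ∈ range (2 * m + 1), (-1 : ℤ) ^ i * ((2 * m).choose i : ℤ) * ((m : ℤ) - i) ^ (2 * j)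

lemma choose_id1 (m i : ℕ) :
    ((i : ℤ) + 1) * ((2 * (m : ℤ) + 1) - i) * ((2 * m + 2).choose (i + 1) : ℤ)
      = (2 * m + 2) * (2 * m + 1) * ((2 * m).choose i : ℤ) := by
  rcases le_or_gt i (2 * m + 1) with h | h
  · have h1 := Nat.add_one_mul_choose_eq (2 * m + 1) i
    have h2 : (2 * m).choose i * (2 * m + 1) = (2 * m + 1).choose i * (2 * m + 1 - i) :=
      Nat.choose_mul_succ_eq (2 * m) i
    have h1' := congrArg (Nat.cast (R := ℤ)) h1
    have h2' := congrArg (Nat.cast (R := ℤ)) h2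
    rw [Nat.cast_mul, Nat.cast_mul, Nat.cast_sub h] at h2'
    push_cast at h1' h2'
    nlinarith [h1', h2']
  · have e1 : (2 * m + 2).choose (i + 1) = 0 := Nat.choose_eq_zero_of_lt (by omega)
    have e2 : (2 * m).choose i = 0 := Nat.choose_eq_zero_of_lt (by omega)
    rw [e1, e2]; push_cast; ring

lemma A_succ_succ (j m : ℕ) :
    A (j + 1) (m + 1) = ((m : ℤ) + 1) ^ 2 * A j (m + 1) + (2 * m + 2) * (2 * m + 1) * A j m := by
  have claim1 : A (j + 1) (m + 1) - ((m : ℤ) + 1) ^ 2 * A j (m + 1)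
      = ∑ i ∈ range (2 * m + 2 + 1), (-1 : ℤ) ^ i * ((2 * m + 2).choose i : ℤ) *
          (((m : ℤ) + 1) - i) ^ (2 * j) * ((((m : ℤ) + 1) - i) ^ 2 - ((m : ℤ) + 1) ^ 2) := by
    rw [A, A, Finset.mul_sum, ← Finset.sum_sub_distrib]
    have hr : 2 * (m + 1) + 1 = 2 * m + 2 + 1 := by ring
    rw [hr]
    apply Finset.sum_congr rfl
    intro i _
    have hg : (2 * (m + 1)).choose i = (2 * m + 2).choose i := by ring_nf
    rw [hg]
    push_cast
    ring
  have claim3 : ∀ i : ℕ, (-1 : ℤ) ^ (i + 1) * ((2 * m + 2).choose (i + 1) : ℤ) *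
        (((m : ℤ) + 1) - ((i : ℤ) + 1)) ^ (2 * j) *
        ((((m : ℤ) + 1) - ((i : ℤ) + 1)) ^ 2 - ((m : ℤ) + 1) ^ 2)
      = (2 * m + 2) * (2 * m + 1) * ((-1 : ℤ) ^ i * ((2 * m).choose i : ℤ) *
          ((m : ℤ) - i) ^ (2 * j)) := by
    intro i
    have hch := choose_id1 m i
    have hm : ((m : ℤ) + 1) - ((i : ℤ) + 1) = (m : ℤ) - i := by ring
    rw [hm, pow_succ]
    linear_combination ((-1 : ℤ) ^ i * ((m : ℤ) - i) ^ (2 * j)) * hch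
  have key : A (j + 1) (m + 1) - ((m : ℤ) + 1) ^ 2 * A j (m + 1)
      = (2 * m + 2) * (2 * m + 1) * A j m := by
    rw [claim1, Finset.sum_range_succ']
    have h0 : (-1 : ℤ) ^ 0 * ((2 * m + 2).choose 0 : ℤ) * (((m : ℤ) + 1) - ((0 : ℕ) : ℤ)) ^ (2 * j) *
        ((((m : ℤ) + 1) - ((0 : ℕ) : ℤ)) ^ 2 - ((m : ℤ) + 1) ^ 2) = 0 := by push_cast; ring
    rw [h0, add_zero]
    have hs : ∀ i ∈ range (2 * m + 2),
        (-1 : ℤ) ^ (i + 1) * ((2 * m + 2).choose (i + 1) : ℤ) *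
          (((m : ℤ) + 1) - ((i + 1 : ℕ) : ℤ)) ^ (2 * j) *
          ((((m : ℤ) + 1) - ((i + 1 : ℕ) : ℤ)) ^ 2 - ((m : ℤ) + 1) ^ 2)
        = (2 * m + 2) * (2 * m + 1) * ((-1 : ℤ) ^ i * ((2 * m).choose i : ℤ) *
            ((m : ℤ) - i) ^ (2 * j)) := by
      intro i _
      have := claim3 i
      push_cast at this ⊢
      exact this
    rw [Finset.sum_congr rfl hs, ← Finset.mul_sum, Finset.sum_range_succ]
    have hlast : (-1 : ℤ) ^ (2 * m + 1) * ((2 * m).choose (2 * m + 1) : ℤ) *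
        ((m : ℤ) - ((2 * m + 1 : ℕ) : ℤ)) ^ (2 * j) = 0 := by
      rw [Nat.choose_eq_zero_of_lt (by omega)]; push_cast; ring
    rw [hlast, add_zero, A]
  linarith [key]

lemma A_zero (m : ℕ) : A 0 m = if m = 0 then 1 else 0 := by
  have h : A 0 m = ∑ i ∈ range (2 * m + 1), (-1 : ℤ) ^ i * ((2 * m).choose i : ℤ) := by
    rw [A]
    apply Finset.sum_congr rfl
    intro i _
    rw [mul_zero, pow_zero, mul_one]
  rw [h, Int.alternating_sum_range_choose]
  by_cases hm : m = 0 <;> simp [hm]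

lemma A_eq_U : ∀ j m, A j m = ((2 * m).factorial : ℤ) * U j m := by
  intro j
  induction j with
  | zero =>
    intro m
    rw [A_zero]
    match m with
    | 0 => simp [U]
    | m + 1 => simp [U_zero_succ]
  | succ j ih =>
    intro m
    match m with
    | 0 =>
      rw [U_succ_zero]
      simp [A]
    | m + 1 =>
      rw [A_succ_succ, ih, ih, U_succ_succ]
      have h1 : (2 * (m + 1)).factorial = (2 * m + 2) * ((2 * m + 1) * (2 * m).factorial) := by
        have : 2 * (m + 1) = (2 * m + 1) + 1 := by ring
        rw [this, Nat.factorial_succ, Nat.factorial_succ]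
      rw [h1]
      push_cast
      ring

lemma neg_one_pow_reflect {m i : ℕ} (h : i ≤ 2 * m) : (-1 : ℤ) ^ (2 * m - i) = (-1 : ℤ) ^ i := by
  have h1 : (-1 : ℤ) ^ (2 * m - i) * (-1 : ℤ) ^ i = 1 := by
    rw [← pow_add]
    have he : 2 * m - i + i = 2 * m := by omega
    rw [he, pow_mul]; norm_num
  have hsq : (-1 : ℤ) ^ i * (-1 : ℤ) ^ i = 1 := by
    rw [← pow_add]
    have he : i + i = 2 * i := by omega
    rw [he, pow_mul]; norm_num
  calc (-1 : ℤ) ^ (2 * m - i) = (-1 : ℤ) ^ (2 * m - i) * ((-1 : ℤ) ^ i * (-1 : ℤ) ^ i) := by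
        rw [hsq, mul_one]
    _ = ((-1 : ℤ) ^ (2 * m - i) * (-1 : ℤ) ^ i) * (-1 : ℤ) ^ i := by ring
    _ = (-1 : ℤ) ^ i := by rw [h1, one_mul]

lemma two_R_eq_A (j m : ℕ) (hj : 1 ≤ j) : 2 * R j m = A j m := by
  set g : ℕ → ℤ := fun i => (-1 : ℤ) ^ i * ((2 * m).choose i : ℤ) * ((m : ℤ) - i) ^ (2 * j) with hg
  have hR : R j m = ∑ i ∈ range (m + 1), g i := by
    rw [R]
    apply Finset.sum_congr rfl
    intro i hi
    rw [Finset.mem_range] at hi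
    have hle : i ≤ m := by omega
    rw [hg]
    simp only
    rw [Nat.cast_pow, Nat.cast_sub hle]
  have hsym : ∀ i, i ≤ 2 * m → g (2 * m - i) = g i := by
    intro i hi
    rw [hg]
    simp only
    rw [neg_one_pow_reflect hi, Nat.choose_symm hi, Nat.cast_sub hi]
    have hpow : ((m : ℤ) - ((2 * (m : ℤ)) - i)) ^ (2 * j) = ((m : ℤ) - i) ^ (2 * j) := by
      have : (m : ℤ) - (2 * (m : ℤ) - i) = -((m : ℤ) - i) := by ring
      rw [this, Even.neg_pow (even_two_mul j)]
    push_cast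
    rw [hpow]
  have hgm : g m = 0 := by
    rw [hg]
    simp only
    rw [sub_self, zero_pow (by omega : 2 * j ≠ 0), mul_zero]
  have hA : A j m = ∑ i ∈ range (m + 1), g i + ∑ i ∈ range m, g i := by
    rw [A]
    have hsplit : 2 * m + 1 = (m + 1) + m := by omega
    rw [hsplit, Finset.sum_range_add]
    congr 1
    have hstep : ∀ i ∈ range m, g ((m + 1) + i) = g (m - 1 - i) := by
      intro i hi
      rw [Finset.mem_range] at hi
      have h1 : (m + 1) + i ≤ 2 * m := by omega
      have h2 : 2 * m - ((m + 1) + i) = m - 1 - i := by omega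
      rw [← hsym _ h1, h2]
    rw [Finset.sum_congr rfl hstep, Finset.sum_range_reflect]
  have hRm : ∑ i ∈ range (m + 1), g i = ∑ i ∈ range m, g i + g m := Finset.sum_range_succ g m
  rw [hR, hA, hRm, hgm]
  ring

def E (t : ℕ) (x : ℚ) : ℚ := x * ∏ s ∈ range t, (x ^ 2 - ((s : ℚ) + 1) ^ 2)

def cf (t : ℕ) (x : ℚ) : ℚ := x * E t x

def cfe : ℕ → ℚ → ℚ
  | 0, _ => 1
  | t + 1, x => cf t x

def pr (t : ℕ) (x : ℚ) : ℚ := ∏ s ∈ range (t + 1), ((x + ((s : ℚ) + 1)) * (x - s))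

def G (t : ℕ) (x : ℚ) : ℚ := (2 * x + 1) * pr t x / (2 * (2 * (t + 1) + 1))

lemma E_succ (t : ℕ) (x : ℚ) : E (t + 1) x = E t x * (x ^ 2 - ((t : ℚ) + 1) ^ 2) := by
  rw [E, E, Finset.prod_range_succ]; ring

lemma P1 : ∀ (t : ℕ) (x : ℚ), pr t x = (x + ((t : ℚ) + 1)) * E t x := by
  intro t
  induction t with
  | zero => intro x; rw [pr, E]; simp
  | succ t ih =>
    intro x
    rw [pr, Finset.prod_range_succ, ← pr, ih, E_succ]
    push_cast
    ring

lemma P2 : ∀ (t : ℕ) (x : ℚ), pr t x = (x - (t : ℚ)) * E t (x + 1) := by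
  intro t
  induction t with
  | zero => intro x; rw [pr, E]; simp; ring_nf
  | succ t ih =>
    intro x
    rw [pr, Finset.prod_range_succ, ← pr, ih, E_succ]
    push_cast
    ring

lemma G_diff (t : ℕ) (x : ℚ) : G t (x + 1) - G t x = cf t (x + 1) := by
  rw [G, G, P1 t (x + 1), P2 t x, cf]
  have hD : (2 * (2 * ((t : ℚ) + 1) + 1)) ≠ 0 := by positivity
  field_simp
  ring

lemma pow_eq_sum_cfe : ∀ (j : ℕ) (x : ℚ),
    x ^ (2 * j) = ∑ m ∈ range (j + 1), (U j m : ℚ) * cfe m x := by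
  intro j
  induction j with
  | zero => intro x; simp [cfe, U]
  | succ j ih =>
    intro x
    have hkey : ∀ m : ℕ, x ^ 2 * cfe m x = cfe (m + 1) x + (m : ℚ) ^ 2 * cfe m x := by
      intro m
      match m with
      | 0 => simp [cfe, cf, E]; ring
      | m + 1 =>
        show x ^ 2 * cf m x = cf (m + 1) x + _ * cf m x
        rw [cf, cf, E_succ]
        push_cast
        ring
    have h1 : x ^ (2 * (j + 1)) = x ^ 2 * x ^ (2 * j) := by
      rw [← pow_add]; congr 1; ring
    rw [h1, ih, Finset.mul_sum]
    have h2 : ∀ m ∈ range (j + 1), x ^ 2 * ((U j m : ℚ) * cfe m x)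
        = (U j m : ℚ) * cfe (m + 1) x + (m : ℚ) ^ 2 * (U j m : ℚ) * cfe m x := by
      intro m _
      calc x ^ 2 * ((U j m : ℚ) * cfe m x) = (U j m : ℚ) * (x ^ 2 * cfe m x) := by ring
        _ = (U j m : ℚ) * (cfe (m + 1) x + (m : ℚ) ^ 2 * cfe m x) := by rw [hkey m]
        _ = _ := by ring
    rw [Finset.sum_congr rfl h2]
    rw [Finset.sum_add_distrib]
    -- RHS : ∑ m ∈ range (j+2), U (j+1) m * cfe m x
    rw [Finset.sum_range_succ' (fun m => (U (j + 1) m : ℚ) * cfe m x) (j + 1)]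
    have hz : (U (j + 1) 0 : ℚ) * cfe 0 x = 0 := by rw [U_succ_zero]; simp
    rw [hz, add_zero]
    have h4 : ∀ m ∈ range (j + 1), (U (j + 1) (m + 1) : ℚ) * cfe (m + 1) x
        = (U j m : ℚ) * cfe (m + 1) x + ((m : ℚ) + 1) ^ 2 * (U j (m + 1) : ℚ) * cfe (m + 1) x := by
      intro m _
      rw [U_succ_succ]
      push_cast
      ring
    rw [Finset.sum_congr rfl h4, Finset.sum_add_distrib]
    congr 1
    -- ∑ m ∈ range (j+1), m^2 U j m cfe m x = ∑ m ∈ range (j+1), (m+1)^2 U j (m+1) cfe (m+1) x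
    have e1 := Finset.sum_range_succ' (fun m => ((m : ℚ)) ^ 2 * (U j m : ℚ) * cfe m x) (j + 1)
    have e2 := Finset.sum_range_succ (fun m => ((m : ℚ)) ^ 2 * (U j m : ℚ) * cfe m x) (j + 1)
    have hz3 : (((j + 1 : ℕ)) : ℚ) ^ 2 * (U j (j + 1) : ℚ) * cfe (j + 1) x = 0 := by
      rw [U_eq_zero j (j + 1) (by omega)]; norm_num
    rw [hz3, add_zero] at e2
    have e3 : ∑ m ∈ range (j + 1), ((m : ℚ)) ^ 2 * (U j m : ℚ) * cfe m x
        = ∑ m ∈ range (j + 1), (((m + 1 : ℕ)) : ℚ) ^ 2 * (U j (m + 1) : ℚ) * cfe (m + 1) x := by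
      rw [← e2, e1]
      norm_num
    rw [e3]
    apply Finset.sum_congr rfl
    intro m _
    push_cast
    ring

lemma closed_form (j : ℕ) : ∀ n : ℕ,
    ∑ i ∈ range n, ((i : ℚ) + 1) ^ (2 * (j + 1))
      = ∑ m ∈ range (j + 1), (U (j + 1) (m + 1) : ℚ) * G m (n : ℚ) := by
  intro n
  induction n with
  | zero =>
    simp only [range_zero, Finset.sum_empty, Nat.cast_zero]
    symm
    apply Finset.sum_eq_zero
    intro m _
    have hpr : pr m 0 = 0 := by
      rw [pr]
      apply Finset.prod_eq_zero (Finset.mem_range.mpr (by omega : 0 < m + 1))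
      norm_num
    rw [G, hpr]
    norm_num
  | succ n ih =>
    rw [Finset.sum_range_succ, ih]
    have hA1 := pow_eq_sum_cfe (j + 1) ((n : ℚ) + 1)
    rw [hA1, Finset.sum_range_succ' (fun m => (U (j + 1) m : ℚ) * cfe m ((n : ℚ) + 1)) (j + 1)]
    have hz : (U (j + 1) 0 : ℚ) * cfe 0 ((n : ℚ) + 1) = 0 := by rw [U_succ_zero]; simp
    rw [hz, add_zero, ← Finset.sum_add_distrib]
    apply Finset.sum_congr rfl
    intro m _
    have hG := G_diff m (n : ℚ)
    have hcast : ((n + 1 : ℕ) : ℚ) = (n : ℚ) + 1 := by push_cast; ring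
    rw [hcast]
    show (U (j + 1) (m + 1) : ℚ) * G m (n : ℚ) + (U (j + 1) (m + 1) : ℚ) * cf m ((n : ℚ) + 1) = _
    rw [← hG]
    ring

open Polynomial in
noncomputable def prP (t : ℕ) : ℚ[X] :=
  ∏ s ∈ range (t + 1), ((X + Polynomial.C ((s : ℚ) + 1)) * (X - Polynomial.C (s : ℚ)))

open Polynomial in
noncomputable def GP (t : ℕ) : ℚ[X] :=
  Polynomial.C (1 / (2 * (2 * ((t : ℚ) + 1) + 1))) * ((2 * X + 1) * prP t)

open Polynomial in
noncomputable def PH (j : ℕ) : ℚ[X] :=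
  ∑ m ∈ range (j + 1), Polynomial.C ((U (j + 1) (m + 1) : ℚ)) * GP m

open Polynomial in
noncomputable def qP (j : ℕ) : ℚ[X] :=
  ∑ i ∈ range (2 * (j + 1) + 1),
    Polynomial.C (bernoulli' i * ((2 * (j + 1) + 1).choose i : ℚ) / (2 * ((j : ℚ) + 1) + 1)) *
      X ^ (2 * (j + 1) + 1 - i)

lemma eval_prP (t : ℕ) (x : ℚ) : (prP t).eval x = pr t x := by
  rw [prP, pr, Polynomial.eval_prod]
  apply Finset.prod_congr rfl
  intro s _
  simp

lemma eval_GP (t : ℕ) (x : ℚ) : (GP t).eval x = G t x := by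
  rw [GP, G]
  simp [eval_prP]
  push_cast
  field_simp

lemma eval_PH (j : ℕ) (x : ℚ) :
    (PH j).eval x = ∑ m ∈ range (j + 1), (U (j + 1) (m + 1) : ℚ) * G m x := by
  rw [PH, Polynomial.eval_finset_sum]
  apply Finset.sum_congr rfl
  intro m _
  simp [eval_GP]

lemma eval_qP (j : ℕ) (x : ℚ) :
    (qP j).eval x = ∑ i ∈ range (2 * (j + 1) + 1),
      bernoulli' i * ((2 * (j + 1) + 1).choose i : ℚ) * x ^ (2 * (j + 1) + 1 - i) /
        (2 * ((j : ℚ) + 1) + 1) := by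
  rw [qP, Polynomial.eval_finset_sum]
  apply Finset.sum_congr rfl
  intro i _
  simp
  ring

lemma PH_eq_qP (j : ℕ) : PH j = qP j := by
  apply Polynomial.eq_of_infinite_eval_eq
  apply Set.infinite_of_injective_forall_mem (f := fun n : ℕ => (n : ℚ))
    (Nat.cast_injective)
  intro n
  show (PH j).eval (n : ℚ) = (qP j).eval (n : ℚ)
  rw [eval_PH, eval_qP, ← closed_form j n]
  have h1 : ∑ i ∈ range n, ((i : ℚ) + 1) ^ (2 * (j + 1))
      = ∑ i ∈ Finset.Ico 1 (n + 1), (i : ℚ) ^ (2 * (j + 1)) := by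
    rw [Finset.sum_Ico_eq_sum_range]
    simp only [Nat.add_sub_cancel]
    apply Finset.sum_congr rfl
    intro i _
    push_cast
    ring
  rw [h1, sum_Ico_pow n (2 * (j + 1))]
  apply Finset.sum_congr rfl
  intro i _
  push_cast
  ring

lemma coeff_qP (j : ℕ) : (qP j).coeff 1 = bernoulli' (2 * (j + 1)) := by
  rw [qP, Polynomial.finset_sum_coeff]
  rw [Finset.sum_eq_single (2 * (j + 1))]
  · have he : 2 * (j + 1) + 1 - 2 * (j + 1) = 1 := by omega
    rw [he, Polynomial.coeff_C_mul, Polynomial.coeff_X_pow]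
    rw [Nat.choose_succ_self_right]
    simp only [if_pos rfl, mul_one]
    have hne : (2 * ((j : ℚ) + 1) + 1) ≠ 0 := by positivity
    push_cast
    field_simp
  · intro i hi hne
    rw [Polynomial.coeff_C_mul, Polynomial.coeff_X_pow]
    have h1 : ¬((1 : ℕ) = 2 * (j + 1) + 1 - i) := by
      rw [Finset.mem_range] at hi; omega
    rw [if_neg h1, mul_zero]
  · intro h
    exact absurd (Finset.mem_range.mpr (by omega)) h

lemma prod_shift1 (m : ℕ) : (∏ s ∈ range m, ((s : ℚ) + 1)) = (m.factorial : ℚ) := by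
  have h := congrArg (Nat.cast (R := ℚ)) (Finset.prod_range_add_one_eq_factorial m)
  push_cast at h
  exact h

lemma prod_shift2 (m : ℕ) : (∏ s ∈ range m, ((s : ℚ) + 2)) = ((m + 1).factorial : ℚ) := by
  induction m with
  | zero => simp
  | succ m ih =>
    rw [Finset.prod_range_succ, ih]
    have : (m + 1 + 1).factorial = (m + 2) * (m + 1).factorial := by
      rw [show m + 1 + 1 = (m + 1) + 1 from rfl, Nat.factorial_succ]
    rw [this]
    push_cast
    ring

lemma coeff_GP (m : ℕ) : (GP m).coeff 1
    = (1 / (2 * (2 * ((m : ℚ) + 1) + 1))) *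
        ((-1 : ℚ) ^ m * (m.factorial : ℚ) * ((m + 1).factorial : ℚ)) := by
  rw [GP, Polynomial.coeff_C_mul]
  congr 1
  have hsplit : (2 * Polynomial.X + 1) * prP m
      = Polynomial.X * ((2 * Polynomial.X + 1) * (Polynomial.X + 1) *
          ∏ s ∈ range m, ((Polynomial.X + Polynomial.C (((s + 1 : ℕ) : ℚ) + 1)) *
            (Polynomial.X - Polynomial.C ((s + 1 : ℕ) : ℚ)))) := by
    rw [prP, Finset.prod_range_succ']
    norm_num
    ring
  rw [hsplit, Polynomial.coeff_X_mul _ 0,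
    Polynomial.coeff_zero_eq_eval_zero, Polynomial.eval_mul, Polynomial.eval_mul,
    Polynomial.eval_prod]
  have hp : ∏ s ∈ range m,
      Polynomial.eval 0 ((Polynomial.X + Polynomial.C (((s + 1 : ℕ) : ℚ) + 1)) *
        (Polynomial.X - Polynomial.C ((s + 1 : ℕ) : ℚ)))
      = (-1 : ℚ) ^ m * (m.factorial : ℚ) * ((m + 1).factorial : ℚ) := by
    clear hsplit
    induction m with
    | zero => simp
    | succ mm ih =>
      rw [Finset.prod_range_succ, ih]
      have e : Polynomial.eval 0 ((Polynomial.X + Polynomial.C (((mm + 1 : ℕ) : ℚ) + 1)) *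
          (Polynomial.X - Polynomial.C ((mm + 1 : ℕ) : ℚ)))
          = -(((mm : ℚ) + 2) * ((mm : ℚ) + 1)) := by
        simp
        push_cast
        ring
      rw [e, Nat.factorial_succ (mm + 1), Nat.factorial_succ mm]
      push_cast
      ring
  rw [hp]
  simp

lemma bern_id (j : ℕ) : bernoulli' (2 * (j + 1))
    = ∑ m ∈ range (j + 1), (U (j + 1) (m + 1) : ℚ) *
        ((1 / (2 * (2 * ((m : ℚ) + 1) + 1))) *
          ((-1 : ℚ) ^ m * (m.factorial : ℚ) * ((m + 1).factorial : ℚ))) := by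
  rw [← coeff_qP, ← PH_eq_qP, PH, Polynomial.finset_sum_coeff]
  apply Finset.sum_congr rfl
  intro m _
  rw [Polynomial.coeff_C_mul, coeff_GP]

lemma R_cast (j m : ℕ) (hj : 1 ≤ j) :
    (R j m : ℚ) = ((2 * m).factorial : ℚ) * (U j m : ℚ) / 2 := by
  have h := two_R_eq_A j m hj
  rw [A_eq_U] at h
  rw [eq_div_iff (two_ne_zero (α := ℚ))]
  exact_mod_cast (by linarith [h] : R j m * 2 = ((2 * m).factorial : ℤ) * U j m)

lemma bern_R (j : ℕ) (hj : 1 ≤ j) : (bernoulli' (2 * j) : ℚ)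
    = -∑ m ∈ Finset.Icc 1 j, (-1 : ℚ) ^ m *
        ((m.factorial : ℚ) * ((m - 1).factorial : ℚ) / ((2 * m + 1).factorial : ℚ)) *
        (R j m : ℚ) := by
  obtain ⟨t, rfl⟩ : ∃ t, j = t + 1 := ⟨j - 1, by omega⟩
  rw [bern_id t]
  rw [show Finset.Icc 1 (t + 1) = Finset.Ico 1 (t + 2) from (Finset.Ico_add_one_right_eq_Icc 1 (t + 1)).symm,
    Finset.sum_Ico_eq_sum_range]
  simp only [show t + 2 - 1 = t + 1 from rfl]
  rw [← Finset.sum_neg_distrib]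
  apply Finset.sum_congr rfl
  intro m _
  have hR := R_cast (t + 1) (m + 1) (by omega)
  have h1 : (1 + m) - 1 = m := by omega
  have h2 : (1 + m).factorial = (m + 1).factorial := by rw [Nat.add_comm]
  have h3 : (2 * (1 + m) + 1).factorial = (2 * m + 3) * ((2 * (m + 1)).factorial) := by
    have : 2 * (1 + m) + 1 = (2 * (m + 1)) + 1 := by ring
    rw [this, Nat.factorial_succ]
    ring_nf
  have h4 : R (t + 1) (1 + m) = R (t + 1) (m + 1) := by rw [Nat.add_comm 1 m]
  rw [h1, h2, h3, h4, hR]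
  have hf1 : ((2 * (m + 1)).factorial : ℚ) ≠ 0 := by
    exact_mod_cast Nat.factorial_ne_zero _
  have hm3 : ((2 : ℚ) * m + 3) ≠ 0 := by positivity
  have hpow : (-1 : ℚ) ^ (1 + m) = -(-1 : ℚ) ^ m := by
    rw [Nat.add_comm, pow_succ]; ring
  rw [hpow]
  push_cast
  field_simp
  ring

theorem stmt_18 (k n : ℕ) (hk : 1 ≤ k) (hn : 1 ≤ n) :
    (S k n : ℚ) =
      (n : ℚ) ^ (k + 1) / (k + 1 : ℚ) + (n : ℚ) ^ k / 2 -
        (1 / (k + 1 : ℚ)) *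
          ∑ j ∈ Finset.Icc 1 (k / 2), ∑ m ∈ Finset.Icc 1 j,
            (-1 : ℚ) ^ m *
              ((Nat.factorial m : ℚ) * (Nat.factorial (m - 1) : ℚ) /
                (Nat.factorial (2 * m + 1) : ℚ)) *
              ((k + 1).choose (2 * j) : ℚ) * (R j m : ℚ) * (n : ℚ) ^ (k + 1 - 2 * j) := by
  have hkq : ((k : ℚ) + 1) ≠ 0 := by positivity
  have hS : (S k n : ℚ) = ∑ i ∈ Finset.Ico 1 (n + 1), (i : ℚ) ^ k := by
    rw [S, ← Finset.Ico_add_one_right_eq_Icc]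
    push_cast
    rfl
  rw [hS, sum_Ico_pow n k]
  obtain ⟨k', rfl⟩ : ∃ k', k = k' + 1 := ⟨k - 1, by omega⟩
  set f : ℕ → ℚ := fun i =>
    bernoulli' i * (((k' + 1) + 1).choose i : ℚ) * (n : ℚ) ^ ((k' + 1) + 1 - i) / (((k' + 1 : ℕ) : ℚ) + 1)
    with hf
  rw [Finset.sum_range_succ' f (k' + 1), Finset.sum_range_succ' (fun i => f (i + 1)) k']
  have hf0 : f 0 = (n : ℚ) ^ (k' + 1 + 1) / (((k' + 1 : ℕ) : ℚ) + 1) := by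
    rw [hf]; simp [bernoulli'_zero]
  have hf1 : f (0 + 1) = (n : ℚ) ^ (k' + 1) / 2 := by
    rw [hf]
    simp only [zero_add, bernoulli'_one, Nat.choose_one_right]
    push_cast
    have : (k' : ℚ) + 1 + 1 ≠ 0 := by positivity
    field_simp
  -- even/odd split of the remaining sum
  set g : ℕ → ℚ := fun j =>
    bernoulli' (2 * j) * (((k' + 1) + 1).choose (2 * j) : ℚ) * (n : ℚ) ^ ((k' + 1) + 1 - 2 * j) /
      (((k' + 1 : ℕ) : ℚ) + 1) with hg
  have heo : ∑ i ∈ range k', f (i + 1 + 1) = ∑ j ∈ Finset.Icc 1 ((k' + 1) / 2), g j := by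
    rw [← Finset.sum_filter_add_sum_filter_not (range k') (fun i => Even i)]
    have hodd : ∑ i ∈ Finset.filter (fun i => ¬Even i) (range k'), f (i + 1 + 1) = 0 := by
      apply Finset.sum_eq_zero
      intro i hi
      rw [Finset.mem_filter] at hi
      have hOdd : Odd (i + 1 + 1) := by
        rcases Nat.even_or_odd i with h | h
        · exact absurd h hi.2
        · obtain ⟨c, rfl⟩ := h; exact ⟨c + 1, by ring⟩
      rw [hf]
      simp only
      rw [bernoulli'_eq_zero_of_odd hOdd (by omega)]
      ring
    rw [hodd, add_zero]
    apply Finset.sum_nbij' (i := fun i => i / 2 + 1) (j := fun j => 2 * j - 2)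
    · intro a ha
      rw [Finset.mem_filter, Finset.mem_range, Nat.even_iff] at ha
      rw [Finset.mem_Icc]
      omega
    · intro b hb
      rw [Finset.mem_Icc] at hb
      rw [Finset.mem_filter, Finset.mem_range, Nat.even_iff]
      omega
    · intro a ha
      rw [Finset.mem_filter, Finset.mem_range, Nat.even_iff] at ha
      omega
    · intro b hb
      rw [Finset.mem_Icc] at hb
      omega
    · intro a ha
      rw [Finset.mem_filter, Finset.mem_range, Nat.even_iff] at ha
      rw [hf, hg]
      simp only
      have h2a : 2 * (a / 2 + 1) = a + 1 + 1 := by omega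
      rw [h2a]
  rw [heo, hf0, hf1]
  -- now rewrite each bernoulli' (2j) via bern_R
  have hmain : ∑ j ∈ Finset.Icc 1 ((k' + 1) / 2), g j
      = -(1 / (((k' + 1 : ℕ) : ℚ) + 1)) *
          ∑ j ∈ Finset.Icc 1 ((k' + 1) / 2), ∑ m ∈ Finset.Icc 1 j,
            (-1 : ℚ) ^ m *
              ((Nat.factorial m : ℚ) * (Nat.factorial (m - 1) : ℚ) /
                (Nat.factorial (2 * m + 1) : ℚ)) *
              (((k' + 1) + 1).choose (2 * j) : ℚ) * (R j m : ℚ) *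
              (n : ℚ) ^ ((k' + 1) + 1 - 2 * j) := by
    rw [Finset.mul_sum]
    apply Finset.sum_congr rfl
    intro j hj
    rw [Finset.mem_Icc] at hj
    rw [hg]
    simp only
    rw [bern_R j hj.1, neg_mul, neg_mul, neg_div, neg_mul, neg_inj,
      Finset.sum_mul, Finset.sum_mul, Finset.sum_div, Finset.mul_sum]
    apply Finset.sum_congr rfl
    intro m _
    field_simp
  rw [hmain]
  push_cast
  ring
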